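/- (Theorem 2.9(b)) Let A be a unital C*-algebra and u_{ij} ∈ A (1 ≤ i,j ≤ n) be self-adjoint. Let p ∈ P(k,l) and q ∈ P(k',l') be partitions. If the relations R(p) and R(q) hold for the u_{ij}, then the relations R(p⊗q) hold, where p⊗q ∈ P(k+k', l+l') is the tensor product (horizontal concatenation) of p and q. -/

import Mathlib

open scoped Classical

namespace PartitionCstar

/-- A partition in `P(k,l)`: an equivalence relation (whose classes are the blocks)
on the disjoint union of `k` upper points and `l` lower points. -/
abbrev Partition (k l : ℕ) := Setoid (Fin k ⊕ Fin l)

/-- `labelsMatch p α β` holds iff, labelling the upper points by `α` and the lower points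
by `β`, the strings (blocks) of `p` connect only equal indices. -/
def labelsMatch {n k l : ℕ} (p : Partition k l) (α : Fin k → Fin n) (β : Fin l → Fin n) :
    Prop :=
  ∀ x y : Fin k ⊕ Fin l, p.r x y → Sum.elim α β x = Sum.elim α β y

/-- The delta function `δ_p(α,β) ∈ {0,1}`. -/
noncomputable def delta {n k l : ℕ} (p : Partition k l) (α : Fin k → Fin n)
    (β : Fin l → Fin n) : ℕ :=
  if labelsMatch p α β then 1 else 0

/-- The relations `R(p)` for a matrix of elements `u` of a unital ring:
`∑_γ δ_p(γ,β) u_{γ₁α₁}⋯u_{γₖαₖ} = ∑_{γ'} δ_p(α,γ') u_{β₁γ'₁}⋯u_{β_lγ'_l}`.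
(For `k = 0` resp. `l = 0` the empty product is `1`, which yields the conventions
`δ_p(∅,β)·1` resp. `δ_p(α,∅)·1`.) -/
def SatisfiesRel {A : Type*} [Ring A] {n : ℕ} (u : Fin n → Fin n → A)
    {k l : ℕ} (p : Partition k l) : Prop :=
  ∀ (α : Fin k → Fin n) (β : Fin l → Fin n),
    (∑ γ : Fin k → Fin n,
      if labelsMatch p γ β then (List.ofFn fun s => u (γ s) (α s)).prod else 0)
    = ∑ γ' : Fin l → Fin n,
      if labelsMatch p α γ' then (List.ofFn fun t => u (β t) (γ' t)).prod else 0

/-- The disjoint union of two set partitions. -/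
def sumPartition {X Y : Type*} (p : Setoid X) (q : Setoid Y) : Setoid (X ⊕ Y) where
  r := Sum.LiftRel p.r q.r
  iseqv := by
    refine ⟨fun a => ?_, fun {a b} h => ?_, fun {a b c} h₁ h₂ => ?_⟩
    · cases a with
      | inl x => exact Sum.LiftRel.inl (p.iseqv.refl x)
      | inr y => exact Sum.LiftRel.inr (q.iseqv.refl y)
    · cases h with
      | inl h => exact Sum.LiftRel.inl (p.iseqv.symm h)
      | inr h => exact Sum.LiftRel.inr (q.iseqv.symm h)
    · cases h₁ with
      | inl h₁ =>
        cases h₂ with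
        | inl h₂ => exact Sum.LiftRel.inl (p.iseqv.trans h₁ h₂)
      | inr h₁ =>
        cases h₂ with
        | inr h₂ => exact Sum.LiftRel.inr (q.iseqv.trans h₁ h₂)

/-- Reindexing equivalence for the tensor product of partitions. -/
def tensorEquiv (k l k' l' : ℕ) :
    (Fin (k + k') ⊕ Fin (l + l')) ≃ ((Fin k ⊕ Fin l) ⊕ (Fin k' ⊕ Fin l')) :=
  (Equiv.sumCongr finSumFinEquiv.symm finSumFinEquiv.symm).trans
    (Equiv.sumSumSumComm (Fin k) (Fin k') (Fin l) (Fin l'))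

/-- The tensor product `p ⊗ q` of two partitions: horizontal concatenation,
blocks kept separate. -/
def tensor {k l k' l' : ℕ} (p : Partition k l) (q : Partition k' l') :
    Partition (k + k') (l + l') :=
  Setoid.comap (tensorEquiv k l k' l') (sumPartition p q)

/-- The join of `p ∈ P(k,l)` and `q ∈ P(l,m)` on the `k` upper, `l` middle and
`m` lower points, identifying the lower points of `p` with the upper points of `q`. -/
def compJoin {k l m : ℕ} (q : Partition l m) (p : Partition k l) :
    Setoid (Fin k ⊕ (Fin l ⊕ Fin m)) :=
  (Setoid.comap (Equiv.sumAssoc (Fin k) (Fin l) (Fin m)).symm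
      (sumPartition p (⊥ : Setoid (Fin m))))
    ⊔ sumPartition (⊥ : Setoid (Fin k)) q

/-- The composition `qp ∈ P(k,m)` of `q ∈ P(l,m)` below `p ∈ P(k,l)`: restriction
of the join to the upper and lower points. -/
def comp {k l m : ℕ} (q : Partition l m) (p : Partition k l) : Partition k m :=
  Setoid.comap (Sum.map id Sum.inr : Fin k ⊕ Fin m → Fin k ⊕ (Fin l ⊕ Fin m))
    (compJoin q p)

/-- Middle points in the composition procedure. -/
def IsMiddle {k l m : ℕ} : Fin k ⊕ (Fin l ⊕ Fin m) → Prop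
  | Sum.inr (Sum.inl _) => True
  | _ => False

/-- `rl q p`: the number of removed loops in the composition of `q` and `p`, i.e. the
number of blocks of the join consisting entirely of middle points. -/
noncomputable def rl {k l m : ℕ} (q : Partition l m) (p : Partition k l) : ℕ :=
  Nat.card {c : Quotient (compJoin q p) //
    ∀ x : Fin k ⊕ (Fin l ⊕ Fin m), Quotient.mk (compJoin q p) x = c → IsMiddle x}

/-- The involution `p* ∈ P(l,k)`: turning `p ∈ P(k,l)` upside down. -/
def involution {k l : ℕ} (p : Partition k l) : Partition l k :=
  Setoid.comap (Equiv.sumComm (Fin l) (Fin k)) p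

/-- The vertical reflection `p̃ ∈ P(k,l)`: reflecting `p` at the vertical axis. -/
def reflect {k l : ℕ} (p : Partition k l) : Partition k l :=
  Setoid.comap (Sum.map Fin.rev Fin.rev) p

/-- The setoid relating `x` and `y` (and nothing else besides equality). -/
def pairSetoid {X : Type*} (x y : X) : Setoid X where
  r a b := a = b ∨ (a = x ∧ b = y) ∨ (a = y ∧ b = x)
  iseqv := by
    refine ⟨fun a => Or.inl rfl, fun {a b} h => ?_, fun {a b c} h₁ h₂ => ?_⟩
    · rcases h with rfl | ⟨ha, hb⟩ | ⟨ha, hb⟩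
      · exact Or.inl rfl
      · exact Or.inr (Or.inr ⟨hb, ha⟩)
      · exact Or.inr (Or.inl ⟨hb, ha⟩)
    · rcases h₁ with rfl | h₁
      · exact h₂
      · rcases h₂ with rfl | h₂
        · exact Or.inr h₁
        · rcases h₁ with ⟨ha, hb⟩ | ⟨ha, hb⟩
          · rcases h₂ with ⟨hb', hc⟩ | ⟨hb', hc⟩
            · exact Or.inr (Or.inl ⟨ha, hc⟩)
            · exact Or.inl (ha.trans hc.symm)
          · rcases h₂ with ⟨hb', hc⟩ | ⟨hb', hc⟩
            · exact Or.inl (ha.trans hc.symm)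
            · exact Or.inr (Or.inr ⟨ha, hc⟩)

/-- Connecting (merging) the blocks of the points `x` and `y` of a partition. -/
def mergeBlocks {X : Type*} (p : Setoid X) (x y : X) : Setoid X :=
  p ⊔ pairSetoid x y

/-- Disconnecting the point `x` from its block and turning it into a singleton block. -/
def disconnect {X : Type*} (p : Setoid X) (x : X) : Setoid X where
  r a b := a = b ∨ (p.r a b ∧ a ≠ x ∧ b ≠ x)
  iseqv := by
    refine ⟨fun a => Or.inl rfl, fun {a b} h => ?_, fun {a b c} h₁ h₂ => ?_⟩
    · rcases h with rfl | ⟨h, ha, hb⟩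
      · exact Or.inl rfl
      · exact Or.inr ⟨p.iseqv.symm h, hb, ha⟩
    · rcases h₁ with rfl | ⟨h₁, ha, hb⟩
      · exact h₂
      · rcases h₂ with rfl | ⟨h₂, hb', hc⟩
        · exact Or.inr ⟨h₁, ha, hb⟩
        · exact Or.inr ⟨p.iseqv.trans h₁ h₂, ha, hc⟩

/-- The partition of the lower points induced by `p ∈ P(0,l)`. -/
def lowerSetoid {l : ℕ} (p : Partition 0 l) : Setoid (Fin l) :=
  Setoid.comap Sum.inr p

/-- The reindexing map for inserting `m` points after position `t` among `l` points. -/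
def insertMap (l m t : ℕ) (ht : t ≤ l) : Fin (l + m) → Fin l ⊕ Fin m := fun i =>
  if h1 : (i : ℕ) < t then Sum.inl ⟨i, lt_of_lt_of_le h1 ht⟩
  else if h2 : (i : ℕ) < t + m then Sum.inr ⟨(i : ℕ) - t, by omega⟩
  else Sum.inl ⟨(i : ℕ) - m, by have := i.isLt; omega⟩

/-- The partition in `P(0, l+m)` obtained from `p ∈ P(0,l)` by inserting `q ∈ P(0,m)`
after the `t`-th lower point of `p` (blocks of `p` and `q` kept separate). -/
def insertAt {l m : ℕ} (p : Partition 0 l) (q : Partition 0 m) (t : ℕ) (ht : t ≤ l) :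
    Partition 0 (l + m) :=
  Setoid.comap (Sum.elim (fun a : Fin 0 => a.elim0) (insertMap l m t ht))
    (sumPartition (lowerSetoid p) (lowerSetoid q))

/-- The reindexing map for the rotation moving the leftmost upper point to the
leftmost lower position. -/
def rotateMap (k l : ℕ) : Fin k ⊕ Fin (l + 1) → Fin (k + 1) ⊕ Fin l
  | Sum.inl a => Sum.inl a.succ
  | Sum.inr b => Fin.cases (Sum.inl (0 : Fin (k + 1))) (fun b' => Sum.inr b') b

/-- The rotated version of `p ∈ P(k+1, l)`: the leftmost upper point becomes the new
leftmost lower point (staying in its block). -/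
def rotate {k l : ℕ} (p : Partition (k + 1) l) : Partition k (l + 1) :=
  Setoid.comap (rotateMap k l) p

/-- The embedding of the remaining points after erasing the lower points `j` and `j+1`. -/
def eraseMap (k l j : ℕ) : Fin k ⊕ Fin l → Fin k ⊕ Fin (l + 2) :=
  Sum.map id fun b =>
    if (b : ℕ) < j then ⟨(b : ℕ), by have := b.isLt; omega⟩
    else ⟨(b : ℕ) + 2, by have := b.isLt; omega⟩

/-- The partition in `P(k,l)` obtained from `p ∈ P(k,l+2)` by connecting the blocks of
the `j`-th and `(j+1)`-th lower points and then erasing those two points. -/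
def erasePair {k l : ℕ} (p : Partition k (l + 2)) (j : Fin (l + 1)) : Partition k l :=
  Setoid.comap (eraseMap k l j)
    (mergeBlocks p (Sum.inr ⟨(j : ℕ), by have := j.isLt; omega⟩)
      (Sum.inr ⟨(j : ℕ) + 1, by have := j.isLt; omega⟩))

/-- The non-unital relations `R(p)` relative to a projection `P₀`:
`P₀·∑_γ δ_p(γ,β) u_{γ₁α₁}⋯u_{γₖαₖ} = (∑_{γ'} δ_p(α,γ') u_{β₁γ'₁}⋯u_{β_lγ'_l})·P₀`,
with the conventions `δ_p(∅,β)·P₀` resp. `δ_p(α,∅)·P₀` for `k = 0` resp. `l = 0`. -/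
def SatisfiesRelNU {A : Type*} [NonUnitalRing A] {n : ℕ} (P₀ : A)
    (u : Fin n → Fin n → A) {k l : ℕ} (p : Partition k l) : Prop :=
  ∀ (α : Fin k → Fin n) (β : Fin l → Fin n),
    (∑ γ : Fin k → Fin n,
      if labelsMatch p γ β then
        (List.ofFn fun s => u (γ s) (α s)).foldl (· * ·) P₀ else 0)
    = ∑ γ' : Fin l → Fin n,
      if labelsMatch p α γ' then
        (List.ofFn fun t => u (β t) (γ' t)).foldr (· * ·) P₀ else 0


lemma tensor_r {k l k' l' : ℕ} (p : Partition k l) (q : Partition k' l')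
    (x y : Fin (k + k') ⊕ Fin (l + l')) :
    (tensor p q).r x y ↔
      Sum.LiftRel p.r q.r (tensorEquiv k l k' l' x) (tensorEquiv k l k' l' y) :=
  Iff.rfl

lemma tensorEquiv_map (k l k' l' : ℕ) (z : Fin k ⊕ Fin l) :
    tensorEquiv k l k' l' (Sum.map (Fin.castAdd k') (Fin.castAdd l') z) = Sum.inl z := by
  rcases z with a | b <;> simp [tensorEquiv, Equiv.sumSumSumComm]

lemma tensorEquiv_map' (k l k' l' : ℕ) (z : Fin k' ⊕ Fin l') :
    tensorEquiv k l k' l' (Sum.map (Fin.natAdd k) (Fin.natAdd l) z) = Sum.inr z := by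
  rcases z with a | b <;> simp [tensorEquiv, Equiv.sumSumSumComm]

lemma labelsMatch_tensor {n k l k' l' : ℕ} (p : Partition k l) (q : Partition k' l')
    (γ : Fin (k + k') → Fin n) (β : Fin (l + l') → Fin n) :
    labelsMatch (tensor p q) γ β ↔
      labelsMatch p (fun s => γ (Fin.castAdd k' s)) (fun t => β (Fin.castAdd l' t)) ∧
      labelsMatch q (fun s => γ (Fin.natAdd k s)) (fun t => β (Fin.natAdd l t)) := by
  constructor
  · intro h
    constructor
    · intro x y hxy
      have := h (Sum.map (Fin.castAdd k') (Fin.castAdd l') x)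
        (Sum.map (Fin.castAdd k') (Fin.castAdd l') y)
        (by rw [tensor_r, tensorEquiv_map, tensorEquiv_map]; exact Sum.LiftRel.inl hxy)
      rcases x with a | b <;> rcases y with a' | b' <;> simpa using this
    · intro x y hxy
      have := h (Sum.map (Fin.natAdd k) (Fin.natAdd l) x)
        (Sum.map (Fin.natAdd k) (Fin.natAdd l) y)
        (by rw [tensor_r, tensorEquiv_map', tensorEquiv_map']; exact Sum.LiftRel.inr hxy)
      rcases x with a | b <;> rcases y with a' | b' <;> simpa using this
  · rintro ⟨h1, h2⟩ x y hxy
    rw [tensor_r] at hxy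
    obtain ⟨a, rfl⟩ := (tensorEquiv k l k' l').symm.surjective x
    obtain ⟨b, rfl⟩ := (tensorEquiv k l k' l').symm.surjective y
    rw [Equiv.apply_symm_apply, Equiv.apply_symm_apply] at hxy
    cases hxy with
    | inl h =>
      rename_i a b
      have := h1 a b h
      have ea : ∀ z : Fin k ⊕ Fin l, (tensorEquiv k l k' l').symm (Sum.inl z)
          = Sum.map (Fin.castAdd k') (Fin.castAdd l') z := fun z =>
        (tensorEquiv k l k' l').injective (by rw [Equiv.apply_symm_apply, tensorEquiv_map])
      rw [ea, ea]
      rcases a with a | b' <;> rcases b with a' | b'' <;> simpa using this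
    | inr h =>
      rename_i a b
      have := h2 a b h
      have ea : ∀ z : Fin k' ⊕ Fin l', (tensorEquiv k l k' l').symm (Sum.inr z)
          = Sum.map (Fin.natAdd k) (Fin.natAdd l) z := fun z =>
        (tensorEquiv k l k' l').injective (by rw [Equiv.apply_symm_apply, tensorEquiv_map'])
      rw [ea, ea]
      rcases a with a | b' <;> rcases b with a' | b'' <;> simpa using this

lemma sum_factor {A : Type*} [Ring A] {n k k' : ℕ}
    (C : (Fin (k + k') → Fin n) → Prop) (C₁ : (Fin k → Fin n) → Prop)
    (C₂ : (Fin k' → Fin n) → Prop) (F : (Fin (k + k') → Fin n) → A)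
    (F₁ : (Fin k → Fin n) → A) (F₂ : (Fin k' → Fin n) → A)
    (hC : ∀ (γ₁ : Fin k → Fin n) (γ₂ : Fin k' → Fin n),
      C (fun i => Sum.elim γ₁ γ₂ (finSumFinEquiv.symm i)) ↔ C₁ γ₁ ∧ C₂ γ₂)
    (hF : ∀ (γ₁ : Fin k → Fin n) (γ₂ : Fin k' → Fin n),
      F (fun i => Sum.elim γ₁ γ₂ (finSumFinEquiv.symm i)) = F₁ γ₁ * F₂ γ₂) :
    (∑ γ : Fin (k + k') → Fin n, if C γ then F γ else 0)
      = (∑ γ₁ : Fin k → Fin n, if C₁ γ₁ then F₁ γ₁ else 0)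
        * (∑ γ₂ : Fin k' → Fin n, if C₂ γ₂ then F₂ γ₂ else 0) := by
  classical
  let E : ((Fin k → Fin n) × (Fin k' → Fin n)) ≃ (Fin (k + k') → Fin n) :=
    (Equiv.sumArrowEquivProdArrow _ _ _).symm.trans
      (Equiv.arrowCongr finSumFinEquiv (Equiv.refl _))
  rw [Finset.sum_mul_sum, ← Equiv.sum_comp E (fun γ => if C γ then F γ else 0),
    Fintype.sum_prod_type]
  refine Finset.sum_congr rfl fun γ₁ _ => Finset.sum_congr rfl fun γ₂ _ => ?_
  have hE : E (γ₁, γ₂) = fun i => Sum.elim γ₁ γ₂ (finSumFinEquiv.symm i) := rfl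
  by_cases h1 : C₁ γ₁ <;> by_cases h2 : C₂ γ₂ <;>
    simp [hE, hC, hF, h1, h2]

/-- Theorem 2.9(b): if the relations `R(p)` and `R(q)` hold for the self-adjoint
generators `u_{ij}`, then so do the relations `R(p⊗q)`. -/
theorem satisfiesRel_tensor {A : Type*} [CStarAlgebra A] {n : ℕ}
    (u : Fin n → Fin n → A) (hsa : ∀ i j, IsSelfAdjoint (u i j))
    {k l k' l' : ℕ} (p : Partition k l) (q : Partition k' l')
    (hp : SatisfiesRel u p) (hq : SatisfiesRel u q) :
    SatisfiesRel u (tensor p q) := by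
  intro α β
  rw [sum_factor (fun γ => labelsMatch (tensor p q) γ β)
      (fun γ₁ => labelsMatch p γ₁ (fun t => β (Fin.castAdd l' t)))
      (fun γ₂ => labelsMatch q γ₂ (fun t => β (Fin.natAdd l t)))
      (fun γ => (List.ofFn fun s => u (γ s) (α s)).prod)
      (fun γ₁ => (List.ofFn fun s => u (γ₁ s) (α (Fin.castAdd k' s))).prod)
      (fun γ₂ => (List.ofFn fun s => u (γ₂ s) (α (Fin.natAdd k s))).prod)
      (fun γ₁ γ₂ => by simp only [labelsMatch_tensor]; simp)
      (fun γ₁ γ₂ => by simp only [List.ofFn_add, List.prod_append]; congr 3; (funext i; rw [show Fin.castLE (Nat.le_add_right k k') i = Fin.castAdd k' i from rfl]; simp); (funext i; simp)),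
    sum_factor (fun γ' => labelsMatch (tensor p q) α γ')
      (fun γ₁' => labelsMatch p (fun s => α (Fin.castAdd k' s)) γ₁')
      (fun γ₂' => labelsMatch q (fun s => α (Fin.natAdd k s)) γ₂')
      (fun γ' => (List.ofFn fun t => u (β t) (γ' t)).prod)
      (fun γ₁' => (List.ofFn fun t => u (β (Fin.castAdd l' t)) (γ₁' t)).prod)
      (fun γ₂' => (List.ofFn fun t => u (β (Fin.natAdd l t)) (γ₂' t)).prod)
      (fun γ₁' γ₂' => by simp only [labelsMatch_tensor]; simp)
      (fun γ₁' γ₂' => by simp only [List.ofFn_add, List.prod_append]; congr 3; (funext i; rw [show Fin.castLE (Nat.le_add_right l l') i = Fin.castAdd l' i from rfl]; simp); (funext i; simp)),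
    hp (fun s => α (Fin.castAdd k' s)) (fun t => β (Fin.castAdd l' t)),
    hq (fun s => α (Fin.natAdd k s)) (fun t => β (Fin.natAdd l t))]


end PartitionCstar
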